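/- Let Θ₁ > 0, α_∞ > 0, let λ be a nonzero finite positive Borel measure on ℝ supported in [0, Θ₁] with λ({0}) = 0 and normalized so that ∫ Θ^{-1} dλ(Θ) = 1, let a ≥ 0 and let σ be a finite positive Borel measure supported in [0, Θ₁] such that for all real s > 0, α_∞ / ( s · ∫ dλ(Θ)/(1 + sΘ) ) = a/s + ∫ dσ(Θ)/(1 + sΘ). Then σ has an atom at 0 of mass exactly α_∞, i.e., σ({0}) = α_∞. -/

import Mathlib

open MeasureTheory Filter Topology

/-- If λ is normalized so that ∫ Θ⁻¹ dλ = 1 (i.e. dλ = Θ dG with G a probability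
measure) and has no atom at 0, then the tortuosity representing measure σ has an
atom at 0 of mass exactly α_∞. -/
theorem stmt15 (Θ₁ αinf : ℝ) (hΘ₁ : 0 < Θ₁) (hα : 0 < αinf)
    (lam : Measure ℝ) [IsFiniteMeasure lam] (hne : lam ≠ 0)
    (hsupp : lam (Set.Icc 0 Θ₁)ᶜ = 0)
    (hatom : lam {0} = 0)
    (hnorm : ∫ Θ : ℝ, Θ⁻¹ ∂lam = 1)
    (a : ℝ) (ha : 0 ≤ a)
    (σ : Measure ℝ) [IsFiniteMeasure σ] (hσsupp : σ (Set.Icc 0 Θ₁)ᶜ = 0)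
    (hrep : ∀ s : ℝ, 0 < s →
      αinf / (s * ∫ Θ : ℝ, (1 + s * Θ)⁻¹ ∂lam) =
        a / s + ∫ Θ : ℝ, (1 + s * Θ)⁻¹ ∂σ) :
    (σ {0}).toReal = αinf := by
  -- a.e. facts
  have hlam_ae : ∀ᵐ Θ ∂lam, 0 < Θ ∧ Θ ≤ Θ₁ := by
    have h1 : ∀ᵐ Θ ∂lam, Θ ∈ Set.Icc 0 Θ₁ := by
      rw [MeasureTheory.ae_iff]
      convert hsupp using 2
      rfl
    have h2 : ∀ᵐ Θ ∂lam, Θ ≠ 0 := by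
      rw [MeasureTheory.ae_iff]
      convert hatom using 2
      ext x; simp
    filter_upwards [h1, h2] with Θ hΘ hΘ0
    exact ⟨lt_of_le_of_ne hΘ.1 (Ne.symm hΘ0), hΘ.2⟩
  have hσ_ae : ∀ᵐ Θ ∂σ, 0 ≤ Θ := by
    have h1 : ∀ᵐ Θ ∂σ, Θ ∈ Set.Icc 0 Θ₁ := by
      rw [MeasureTheory.ae_iff]
      convert hσsupp using 2
      rfl
    filter_upwards [h1] with Θ hΘ using hΘ.1
  -- integrability of Θ⁻¹
  have hint : Integrable (fun Θ : ℝ => Θ⁻¹) lam := by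
    by_contra h
    rw [MeasureTheory.integral_undef h] at hnorm
    exact one_ne_zero hnorm.symm
  -- measurability
  have hmeas : ∀ s : ℝ, AEStronglyMeasurable (fun Θ : ℝ => (1 + s * Θ)⁻¹) lam :=
    fun s => ((measurable_const.add (measurable_id.const_mul s)).inv).aestronglyMeasurable
  have hmeasσ : ∀ s : ℝ, AEStronglyMeasurable (fun Θ : ℝ => (1 + s * Θ)⁻¹) σ :=
    fun s => ((measurable_const.add (measurable_id.const_mul s)).inv).aestronglyMeasurable
  -- limit of s * ∫ (1+sΘ)⁻¹ dλ = ∫ s(1+sΘ)⁻¹ dλ  → ∫ Θ⁻¹ dλ = 1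
  have hD : Tendsto (fun s : ℝ => ∫ Θ : ℝ, s * (1 + s * Θ)⁻¹ ∂lam) atTop (𝓝 1) := by
    have := MeasureTheory.tendsto_integral_filter_of_dominated_convergence
      (μ := lam) (l := atTop) (F := fun s Θ => s * (1 + s * Θ)⁻¹)
      (f := fun Θ : ℝ => Θ⁻¹) (fun Θ => |Θ⁻¹|)
      (Eventually.of_forall fun s => (hmeas s).const_mul s)
      (by
        filter_upwards [eventually_gt_atTop (0:ℝ)] with s hs
        filter_upwards [hlam_ae] with Θ hΘ
        have h1 : 0 < s * Θ := mul_pos hs hΘ.1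
        have h2 : 0 < 1 + s * Θ := by linarith
        have h3 : s * (1 + s * Θ)⁻¹ ≤ s * (s * Θ)⁻¹ :=
          mul_le_mul_of_nonneg_left (inv_anti₀ h1 (by linarith)) hs.le
        have h4 : s * (s * Θ)⁻¹ = Θ⁻¹ := by
          rw [mul_inv, ← mul_assoc, mul_inv_cancel₀ hs.ne', one_mul]
        rw [Real.norm_eq_abs, abs_of_nonneg (by positivity)]
        rw [h4] at h3
        exact h3.trans (le_abs_self _))
      hint.abs
      (by
        filter_upwards [hlam_ae] with Θ hΘ
        have : ∀ᶠ s : ℝ in atTop, s * (1 + s * Θ)⁻¹ = (s⁻¹ + Θ)⁻¹ := by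
          filter_upwards [eventually_gt_atTop (0:ℝ)] with s hs
          have h2 : (0:ℝ) < 1 + s * Θ := by nlinarith [hΘ.1]
          have hq : s⁻¹ + Θ = (1 + s * Θ) / s := by
            field_simp
          rw [hq, inv_div, div_eq_mul_inv]
        rw [tendsto_congr' this]
        have : Tendsto (fun s : ℝ => s⁻¹ + Θ) atTop (𝓝 (0 + Θ)) :=
          tendsto_inv_atTop_zero.add tendsto_const_nhds
        rw [zero_add] at this
        exact (this.inv₀ (ne_of_gt hΘ.1)))
    rwa [hnorm] at this
  -- limit of ∫ (1+sΘ)⁻¹ dσ → σ{0}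
  have hS : Tendsto (fun s : ℝ => ∫ Θ : ℝ, (1 + s * Θ)⁻¹ ∂σ) atTop
      (𝓝 ((σ {0}).toReal)) := by
    have := MeasureTheory.tendsto_integral_filter_of_dominated_convergence
      (μ := σ) (l := atTop) (F := fun s Θ => (1 + s * Θ)⁻¹)
      (f := Set.indicator {0} (fun _ => (1:ℝ))) (fun _ => (1:ℝ))
      (Eventually.of_forall fun s => hmeasσ s)
      (by
        filter_upwards [eventually_ge_atTop (0:ℝ)] with s hs
        filter_upwards [hσ_ae] with Θ hΘ
        have h2 : (1:ℝ) ≤ 1 + s * Θ := by nlinarith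
        rw [Real.norm_eq_abs, abs_of_nonneg (by positivity)]
        exact inv_le_one_of_one_le₀ h2)
      (integrable_const 1)
      (by
        filter_upwards [hσ_ae] with Θ hΘ
        rcases eq_or_lt_of_le hΘ with h0 | h0
        · simp [← h0]
        · have hind : Set.indicator {0} (fun _ => (1:ℝ)) Θ = 0 := by
            simp [Set.indicator_of_notMem, h0.ne']
          rw [hind]
          have h1 : Tendsto (fun s : ℝ => 1 + s * Θ) atTop atTop :=
            tendsto_atTop_add_const_left _ _ (Tendsto.atTop_mul_const h0 tendsto_id)
          exact tendsto_inv_atTop_zero.comp h1)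
    have hval : ∫ Θ : ℝ, Set.indicator {0} (fun _ => (1:ℝ)) Θ ∂σ = (σ {0}).toReal := by
      rw [MeasureTheory.integral_indicator_const (1:ℝ) (measurableSet_singleton 0)]
      simp
      rfl
    rwa [hval] at this
  -- combine
  have hF1 : Tendsto (fun s : ℝ => αinf / (s * ∫ Θ : ℝ, (1 + s * Θ)⁻¹ ∂lam)) atTop
      (𝓝 αinf) := by
    have heq : ∀ᶠ s : ℝ in atTop,
        αinf / (s * ∫ Θ : ℝ, (1 + s * Θ)⁻¹ ∂lam)
          = αinf / ∫ Θ : ℝ, s * (1 + s * Θ)⁻¹ ∂lam := by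
      filter_upwards [] with s
      rw [MeasureTheory.integral_const_mul]
    rw [tendsto_congr' heq]
    have := (tendsto_const_nhds (x := αinf) (f := atTop (α := ℝ))).div hD one_ne_zero
    simpa [Pi.div_def] using this
  have hF2 : Tendsto (fun s : ℝ => αinf / (s * ∫ Θ : ℝ, (1 + s * Θ)⁻¹ ∂lam)) atTop
      (𝓝 (0 + (σ {0}).toReal)) := by
    have heq : ∀ᶠ s : ℝ in atTop,
        αinf / (s * ∫ Θ : ℝ, (1 + s * Θ)⁻¹ ∂lam)
          = a / s + ∫ Θ : ℝ, (1 + s * Θ)⁻¹ ∂σ := by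
      filter_upwards [eventually_gt_atTop (0:ℝ)] with s hs
      exact hrep s hs
    rw [tendsto_congr' heq]
    exact (tendsto_const_nhds.div_atTop tendsto_id).add hS
  have := tendsto_nhds_unique hF1 hF2
  rw [zero_add] at this
  exact this.symm
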